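/- Let ξ, ζ, A, P be positive real numbers with ζ ≤ ξ, A ≥ 1, P ≥ 1. Then for every K ∈ [1, min{P, A}) one has S(min{P, A}) < S(K); that is, on the admissible interval [1, min{P, A}], the communication-stage model S is uniquely minimized at K = min{P, A}. -/
import Mathlib


/-- For positive ξ, ζ, A, P with ζ ≤ ξ, A ≥ 1, P ≥ 1, for every
K ∈ [1, min{P, A}) one has S(min{P, A}) < S(K); i.e. on the admissible interval
[1, min{P, A}] the communication-stage model S is uniquely minimized at K = min{P, A}. -/
theorem stmt_7 (ξ ζ A P : ℝ) (hξ : 0 < ξ) (hζ : 0 < ζ)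
    (hζξ : ζ ≤ ξ) (hA : 1 ≤ A) (hP : 1 ≤ P) :
    ∀ K ∈ Set.Ico (1 : ℝ) (min P A),
      ξ * Real.logb 2 (P / min P A) * (A / min P A) + ζ * Real.logb 2 (min P A) <
        ξ * Real.logb 2 (P / K) * (A / K) + ζ * Real.logb 2 K := by
  rintro K ⟨hK1, hKm⟩
  set m := min P A with hm
  have hm1 : (1 : ℝ) ≤ m := le_min hP hA
  have hmP : m ≤ P := min_le_left _ _
  have hmA : m ≤ A := min_le_right _ _
  have hK0 : (0 : ℝ) < K := lt_of_lt_of_le one_pos hK1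
  have hm0 : (0 : ℝ) < m := lt_of_lt_of_le one_pos hm1
  have hA0 : (0 : ℝ) < A := lt_of_lt_of_le one_pos hA
  have hP0 : (0 : ℝ) < P := lt_of_lt_of_le one_pos hP
  have hKA : K < A := lt_of_lt_of_le hKm hmA
  have hKP : K < P := lt_of_lt_of_le hKm hmP
  have hd0 : 0 < Real.logb 2 m - Real.logb 2 K := by
    have := Real.logb_lt_logb (by norm_num : (1:ℝ) < 2) hK0 hKm
    linarith
  have hL1 : Real.logb 2 (P / K) = Real.logb 2 P - Real.logb 2 K :=
    Real.logb_div (ne_of_gt hP0) (ne_of_gt hK0)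
  have hL2 : Real.logb 2 (P / m) = Real.logb 2 P - Real.logb 2 m :=
    Real.logb_div (ne_of_gt hP0) (ne_of_gt hm0)
  have hL20 : 0 ≤ Real.logb 2 (P / m) :=
    Real.logb_nonneg (by norm_num) ((one_le_div hm0).2 hmP)
  have hAK1 : 1 < A / K := (one_lt_div hK0).2 hKA
  have hAm : A / m ≤ A / K := div_le_div_of_nonneg_left (le_of_lt hA0) hK0 (le_of_lt hKm)
  set L2 := Real.logb 2 (P / m) with hL2def
  set d := Real.logb 2 m - Real.logb 2 K with hddef
  have hL1' : Real.logb 2 (P / K) = L2 + d := by rw [hL1, hL2def, Real.logb_div (ne_of_gt hP0) (ne_of_gt hm0)]; ring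
  rw [hL1']
  nlinarith [mul_nonneg hL20 (sub_nonneg.2 hAm), mul_lt_mul_of_pos_left hAK1 (mul_pos hξ hd0),
    mul_le_mul_of_nonneg_right hζξ (le_of_lt hd0)]
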